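/- Let M be a filtered differential abelian group with spectral sequence E^{p,q}_r, and for each l let E(l)^{p,q}_r be the spectral sequence of the quotient M/F^lM. Fix integers a, b, k. Then the differentials d_r : E^{a,b}_r → E^{a+r,b-r+1}_r vanish for all r ≥ k if and only if for every l the differentials d_r : E(l)^{a,b}_r → E(l)^{a+r,b-r+1}_r vanish for all r ≥ k. -/
import Mathlib


/-!
Bigraded spectral sequence of a filtered differential graded abelian group `M`
(grading `G n = M^n`, differential `d` of degree `+1`, decreasing filtration `F`):
`Z^{p,q}_r = {x ∈ F^pM ∩ M^{p+q} ∣ dx ∈ F^{p+r}M}` and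
`E^{p,q}_r = Z^{p,q}_r/(Z^{p+1,q-1}_{r-1} + d Z^{p-r+1,q+r-2}_{r-1})`.
Degeneration at `E^{a,b}_k` means that `d_r` vanishes on `E^{a,b}_r` for all `r ≥ k`,
which at the level of elements reads: for every `x ∈ Z^{a,b}_r`, `d x` lies in the
boundary subgroup `B^{a+r,b-r+1}_r`.  Statement 2: this holds for `M` iff it holds for
every quotient complex `M/F^lM`.
-/

/-- Bigraded cycles `Z^{p,q}_r = {x ∈ F^pM ∩ M^{p+q} ∣ dx ∈ F^{p+r}M}`. -/
def specZ2 {M : Type*} [AddCommGroup M] (d : M →+ M) (F G : ℤ → AddSubgroup M)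
    (p q r : ℤ) : AddSubgroup M :=
  F p ⊓ G (p + q) ⊓ (F (p + r)).comap d

/-- Bigraded boundaries `B^{p,q}_r = Z^{p+1,q-1}_{r-1} + d Z^{p-r+1,q+r-2}_{r-1}`. -/
def specB2 {M : Type*} [AddCommGroup M] (d : M →+ M) (F G : ℤ → AddSubgroup M)
    (p q r : ℤ) : AddSubgroup M :=
  specZ2 d F G (p + 1) (q - 1) (r - 1) ⊔
    (specZ2 d F G (p - r + 1) (q + r - 2) (r - 1)).map d

/-- Induced filtration (and grading) on the quotient `M/F^lM`. -/
def quotF2 {M : Type*} [AddCommGroup M] (F : ℤ → AddSubgroup M) (l p : ℤ) :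
    AddSubgroup (M ⧸ F l) :=
  (F p).map (QuotientAddGroup.mk' (F l))

/-- Induced differential on the quotient `M/F^lM`. -/
def quotD2 {M : Type*} [AddCommGroup M] (d : M →+ M) (F : ℤ → AddSubgroup M) (l : ℤ)
    (hdF : ∀ p, ∀ x ∈ F p, d x ∈ F p) : (M ⧸ F l) →+ (M ⧸ F l) :=
  QuotientAddGroup.map (F l) (F l) d (fun x hx => hdF l x hx)


section
variable {M : Type*} [AddCommGroup M] (d : M →+ M) (F G : ℤ → AddSubgroup M)

lemma mem_specZ2 {p q r : ℤ} {x : M} :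
    x ∈ specZ2 d F G p q r ↔ x ∈ F p ∧ x ∈ G (p + q) ∧ d x ∈ F (p + r) := by
  simp [specZ2, AddSubgroup.mem_inf, and_assoc, AddSubgroup.mem_comap]

variable (l : ℤ) (hdF : ∀ p, ∀ x ∈ F p, d x ∈ F p)

lemma quotD2_mk (x : M) :
    quotD2 d F l hdF (QuotientAddGroup.mk' (F l) x) = QuotientAddGroup.mk' (F l) (d x) := rfl

lemma specZ2_map_le (p q r : ℤ) :
    (specZ2 d F G p q r).map (QuotientAddGroup.mk' (F l)) ≤
      specZ2 (quotD2 d F l hdF) (quotF2 F l)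
        (fun n => (G n).map (QuotientAddGroup.mk' (F l))) p q r := by
  rintro _ ⟨x, hx, rfl⟩
  rw [SetLike.mem_coe, mem_specZ2] at hx
  rw [mem_specZ2]
  refine ⟨⟨x, hx.1, rfl⟩, ⟨x, hx.2.1, rfl⟩, ?_⟩
  rw [quotD2_mk]
  exact ⟨d x, hx.2.2, rfl⟩

lemma specB2_map_le (p q r : ℤ) :
    (specB2 d F G p q r).map (QuotientAddGroup.mk' (F l)) ≤
      specB2 (quotD2 d F l hdF) (quotF2 F l)
        (fun n => (G n).map (QuotientAddGroup.mk' (F l))) p q r := by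
  rw [specB2, AddSubgroup.map_sup]
  apply sup_le
  · exact le_sup_of_le_left (specZ2_map_le d F G l hdF _ _ _)
  · rw [AddSubgroup.map_map]
    have : (QuotientAddGroup.mk' (F l)).comp d = (quotD2 d F l hdF).comp (QuotientAddGroup.mk' (F l)) := by
      ext x; exact (quotD2_mk d F l hdF x).symm
    rw [this, ← AddSubgroup.map_map]
    exact le_sup_of_le_right (AddSubgroup.map_mono (specZ2_map_le d F G l hdF _ _ _))

end

/-- The spectral sequence of `M` degenerates at `E^{a,b}_k`
(`d_r = 0` on `E^{a,b}_r` for all `r ≥ k`) iff for every `l` the spectral sequence of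
the quotient filtered complex `M/F^lM` degenerates at `E(l)^{a,b}_k`. -/
theorem stmt_2 {M : Type*} [AddCommGroup M] (d : M →+ M) (hd : ∀ x, d (d x) = 0)
    (F G : ℤ → AddSubgroup M) (hF : ∀ p q : ℤ, p ≤ q → F q ≤ F p)
    (hdF : ∀ p, ∀ x ∈ F p, d x ∈ F p)
    (hdG : ∀ n, ∀ x ∈ G n, d x ∈ G (n + 1))
    -- `M = ⊕ₙ Mⁿ` and each `F^pM` is a graded subgroup:
    (hGsup : ⨆ n, G n = ⊤) (hGind : iSupIndep G)
    (hFgr : ∀ p, F p = ⨆ n, (F p ⊓ G n))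
    (a b k : ℤ) (hk : 0 ≤ k) :
    (∀ r : ℤ, k ≤ r → ∀ x ∈ specZ2 d F G a b r,
        d x ∈ specB2 d F G (a + r) (b - r + 1) r) ↔
    (∀ l : ℤ, ∀ r : ℤ, k ≤ r →
        ∀ y ∈ specZ2 (quotD2 d F l hdF) (quotF2 F l)
            (fun n => (G n).map (QuotientAddGroup.mk' (F l))) a b r,
          quotD2 d F l hdF y ∈ specB2 (quotD2 d F l hdF) (quotF2 F l)
            (fun n => (G n).map (QuotientAddGroup.mk' (F l))) (a + r) (b - r + 1) r) := by
  have key : ∀ (l : ℤ) (x y : M), QuotientAddGroup.mk' (F l) x = QuotientAddGroup.mk' (F l) y →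
      x - y ∈ F l := by
    intro l x y hxy
    obtain ⟨z, hz, hxz⟩ := (QuotientAddGroup.mk'_eq_mk' (F l)).1 hxy
    have : x - y = -z := by rw [← hxz]; abel
    rw [this]; exact neg_mem hz
  constructor
  · intro h l r hr y hy
    have hr0 : 0 ≤ r := le_trans hk hr
    rw [mem_specZ2] at hy
    obtain ⟨hy1, hy2, hy3⟩ := hy
    by_cases hl : l ≤ a + r
    · obtain ⟨u, huF, huy⟩ := hy3
      have h0 : quotD2 d F l hdF y = 0 := by
        rw [← huy, QuotientAddGroup.mk'_apply, QuotientAddGroup.eq_zero_iff]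
        exact hF l (a + r) hl huF
      rw [h0]; exact zero_mem _
    · push_neg at hl
      obtain ⟨x, hxF, rfl⟩ := hy1
      obtain ⟨g, hgG, hgy⟩ := hy2
      have hFla : F l ≤ F a := hF a l (by omega)
      have hxg : x - g ∈ F l := key l x g hgy.symm
      have hgF : g ∈ F a := by
        have := (F a).sub_mem hxF (hFla hxg)
        simpa using this
      rw [quotD2_mk] at hy3
      obtain ⟨u, huF, huy⟩ := hy3
      have hdgF : d g ∈ F (a + r) := by
        have h1 : d x - u ∈ F l := key l (d x) u huy.symm
        have h2 : d (x - g) ∈ F l := hdF l _ hxg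
        have : d g = u + (d x - u) - d (x - g) := by rw [map_sub]; abel
        rw [this]
        exact (F (a + r)).sub_mem ((F (a + r)).add_mem huF (hF (a + r) l (by omega) h1))
          (hF (a + r) l (by omega) h2)
      have hgZ : g ∈ specZ2 d F G a b r := (mem_specZ2 d F G).2 ⟨hgF, hgG, hdgF⟩
      have hB := h r hr g hgZ
      have heq : quotD2 d F l hdF (QuotientAddGroup.mk' (F l) x) =
          QuotientAddGroup.mk' (F l) (d g) := by rw [← hgy, quotD2_mk]
      rw [heq]
      exact specB2_map_le d F G l hdF (a + r) (b - r + 1) r ⟨d g, hB, rfl⟩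
  · intro h r hr x hx
    have hr0 : 0 ≤ r := le_trans hk hr
    set l : ℤ := a + 2 * r + 1 with hl
    rw [mem_specZ2] at hx
    obtain ⟨hxF, hxG, hdxF⟩ := hx
    have hπx : QuotientAddGroup.mk' (F l) x ∈ specZ2 (quotD2 d F l hdF) (quotF2 F l)
        (fun n => (G n).map (QuotientAddGroup.mk' (F l))) a b r :=
      specZ2_map_le d F G l hdF a b r ⟨x, (mem_specZ2 d F G).2 ⟨hxF, hxG, hdxF⟩, rfl⟩
    have hb := h l r hr _ hπx
    rw [quotD2_mk, specB2] at hb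
    obtain ⟨yb, hyb, zb, hzb, hsum⟩ := AddSubgroup.mem_sup.1 hb
    obtain ⟨wb, hwb, rfl⟩ := hzb
    rw [mem_specZ2] at hyb
    rw [SetLike.mem_coe, mem_specZ2] at hwb
    obtain ⟨⟨u, huF, rfl⟩, ⟨g1, hg1G, hg1⟩, hy3⟩ := hyb
    obtain ⟨⟨w, hwF, rfl⟩, ⟨g2, hg2G, hg2⟩, hw3⟩ := hwb
    rw [quotD2_mk] at hy3 hw3
    obtain ⟨v, hvF, hv⟩ := hy3
    obtain ⟨v2, hv2F, hv2⟩ := hw3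
    -- basic F l memberships
    have hug1 : u - g1 ∈ F l := key l u g1 hg1.symm
    have hwg2 : w - g2 ∈ F l := key l w g2 hg2.symm
    have hduv : d u - v ∈ F l := key l (d u) v hv.symm
    have hdwv2 : d w - v2 ∈ F l := key l (d w) v2 hv2.symm
    have hsum' : (u + d w) - d x ∈ F l := by
      apply key
      rw [map_add]
      exact hsum
    -- index normalization
    have e1 : a + r + 1 + (b - r + 1 - 1) = a + b + 1 := by ring
    have e2 : a + r + 1 + (r - 1) = a + 2 * r := by ring
    have e3 : a + r - r + 1 = a + 1 := by ring
    have e4 : a + 1 + (b - r + 1 + r - 2) = a + b := by ring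
    have e5 : a + 1 + (r - 1) = a + r := by ring
    rw [e1] at hg1G
    rw [e2] at hvF
    rw [e3] at hwF hg2G hv2F
    rw [e4] at hg2G
    rw [e5] at hv2F
    -- inclusions of F l
    have le1 : F l ≤ F (a + r + 1) := hF _ _ (by omega)
    have le2 : F l ≤ F (a + 2 * r) := hF _ _ (by omega)
    have le3 : F l ≤ F (a + 1) := hF _ _ (by omega)
    have le4 : F l ≤ F (a + r) := hF _ _ (by omega)
    -- memberships of the corrected lifts
    have hg1F : g1 ∈ F (a + r + 1) := by
      have := (F (a + r + 1)).sub_mem huF (le1 hug1); simpa using this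
    have hduF : d u ∈ F (a + 2 * r) := by
      have := (F (a + 2 * r)).add_mem hvF (le2 hduv); simpa using this
    have hdg1F : d g1 ∈ F (a + 2 * r) := by
      have h2 := le2 (hdF l _ hug1)
      rw [map_sub] at h2
      have := (F (a + 2 * r)).sub_mem hduF h2; simpa using this
    have hg2F : g2 ∈ F (a + 1) := by
      have := (F (a + 1)).sub_mem hwF (le3 hwg2); simpa using this
    have hdwF : d w ∈ F (a + r) := by
      have := (F (a + r)).add_mem hv2F (le4 hdwv2); simpa using this
    have hdg2F : d g2 ∈ F (a + r) := by
      have h2 := le4 (hdF l _ hwg2)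
      rw [map_sub] at h2
      have := (F (a + r)).sub_mem hdwF h2; simpa using this
    -- the error term f' = d x - g1 - d g2 lies in F l and is itself a cycle
    have hf'l : d x - g1 - d g2 ∈ F l := by
      have h3 := hdF l _ hwg2
      rw [map_sub] at h3
      have hm := (F l).add_mem ((F l).add_mem ((F l).neg_mem hsum') hug1) h3
      have e : d x - g1 - d g2 = -((u + d w) - d x) + (u - g1) + (d w - d g2) := by abel
      rw [e]; exact hm
    have hdxG : d x ∈ G (a + b + 1) := hdG (a + b) x hxG
    have hdg2G : d g2 ∈ G (a + b + 1) := hdG (a + b) g2 hg2G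
    have hf'G : d x - g1 - d g2 ∈ G (a + b + 1) :=
      (G (a + b + 1)).sub_mem ((G (a + b + 1)).sub_mem hdxG hg1G) hdg2G
    have hf'dF : d (d x - g1 - d g2) ∈ F (a + 2 * r) := by
      have e : d (d x - g1 - d g2) = -(d g1) := by
        rw [map_sub, map_sub, hd, hd]; abel
      rw [e]; exact (F (a + 2 * r)).neg_mem hdg1F
    -- conclude
    rw [specB2]
    apply AddSubgroup.mem_sup.2
    refine ⟨g1 + (d x - g1 - d g2), ?_, d g2, AddSubgroup.mem_map.2 ⟨g2, ?_, rfl⟩, by abel⟩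
    · rw [mem_specZ2, e1, e2]
      exact ⟨(F (a + r + 1)).add_mem hg1F (le1 hf'l),
        (G (a + b + 1)).add_mem hg1G hf'G,
        by rw [map_add]; exact (F (a + 2 * r)).add_mem hdg1F hf'dF⟩
    · rw [mem_specZ2, e3, e4, e5]
      exact ⟨hg2F, hg2G, hdg2F⟩
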